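/- Let T be a triangle with centroid x_T, area |T|, and let φ be the weak function equal to 1 in the interior of T and 0 on ∂T. Then the weak gradient of φ in RT_0(T), defined by (∇_w φ, τ)_T = −(φ_0, ∇·τ)_T + ⟨φ_b, τ·n⟩_{∂T} for all τ ∈ RT_0(T), equals −C_T (x − x_T) where C_T = 2|T| / ‖x − x_T‖²_{L²(T)}. -/

import Mathlib

open MeasureTheory
open scoped InnerProductSpace

local notation "E2" => EuclideanSpace ℝ (Fin 2)

set_option maxHeartbeats 1000000

/-- Weak gradient of the interior basis function: let `T` be a triangle with
vertices `A, B, C`, centroid `x_T` and area `|T|`, and let `φ = {1, 0}` be the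
weak function equal to `1` in the interior of `T` and `0` on `∂T`.  Then the
function `x ↦ -C_T (x - x_T)` with `C_T = 2|T| / ‖x - x_T‖²_{L²(T)}` (which
belongs to `RT₀(T)`) satisfies the defining equation of the weak gradient:
for every `τ ∈ RT₀(T)`, i.e. `τ(x) = a + c x` (for which `∇·τ = 2c` and the
boundary term vanishes since `φ_b = 0`),
`(∇_w φ, τ)_T = -(φ₀, ∇·τ)_T`. -/
theorem weak_gradient_interior_basis
    (A B C : EuclideanSpace ℝ (Fin 2))
    (hABC : AffineIndependent ℝ ![A, B, C])
    (T : Set (EuclideanSpace ℝ (Fin 2)))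
    (hT : T = convexHull ℝ {A, B, C})
    (xT : EuclideanSpace ℝ (Fin 2)) (hxT : xT = (3:ℝ)⁻¹ • (A + B + C))
    (areaT : ℝ) (hareaT : areaT = (volume T).toReal)
    (CT : ℝ) (hCT : CT = 2 * areaT / ∫ x in T, ‖x - xT‖ ^ 2) :
    ∀ (a : EuclideanSpace ℝ (Fin 2)) (c : ℝ),
      ∫ x in T, ⟪-CT • (x - xT), a + c • x⟫_ℝ
        = -(∫ _x in T, (1 : ℝ) * (2 * c)) := by
  intro a c
  -- Basic facts about T
  have hTcomp : IsCompact T := by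
    rw [hT]
    exact Set.Finite.isCompact_convexHull ℝ (by simp)
  have hTm : MeasurableSet T := hTcomp.isClosed.measurableSet
  -- linear independence of B - A, C - A
  have hli : LinearIndependent ℝ ![B - A, C - A] := by
    rw [LinearIndependent.pair_iff]
    intro s t hst
    have h := affineIndependent_iff.mp hABC Finset.univ ![-s - t, s, t]
    simp [Fin.sum_univ_three] at h
    have h1 : (-s - t) + s + t = 0 := by ring
    have h2 : (-s - t) • A + s • B + t • C = 0 := by
      have hst' : s • (B - A) + t • (C - A) = 0 := by simpa using hst
      rw [smul_sub, smul_sub] at hst'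
      rw [sub_smul, neg_smul]
      abel_nf
      abel_nf at hst'
      linear_combination (norm := module) hst'
    have := h h1 h2
    exact ⟨by simpa using this 1, by simpa using this 2⟩
  -- the rotation R
  have hcard : Fintype.card (Fin 2) = Module.finrank ℝ E2 := by simp
  set b : Module.Basis (Fin 2) ℝ E2 := basisOfLinearIndependentOfCardEqFinrank hli hcard with hbdef
  have hb : ⇑b = ![B - A, C - A] := coe_basisOfLinearIndependentOfCardEqFinrank hli hcard
  have hb0 : b 0 = B - A := by rw [hb]; rfl
  have hb1 : b 1 = C - A := by rw [hb]; rfl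
  set R : E2 →ₗ[ℝ] E2 := b.constr ℝ ![C - B, A - B] with hRdef
  have hR0 : R (B - A) = C - B := by
    have := b.constr_basis ℝ ![C - B, A - B] 0
    rwa [hb0] at this
  have hR1 : R (C - A) = A - B := by
    have := b.constr_basis ℝ ![C - B, A - B] 1
    rwa [hb1] at this
  have e0 : R (b 0) = b 1 - b 0 := by rw [hb0, hb1, hR0]; abel
  have e1 : R (b 1) = -(b 0) := by rw [hb0, hb1, hR1]; abel
  have hmat : LinearMap.toMatrix b b R = !![-1, -1; 1, 0] := by
    ext i j
    rw [LinearMap.toMatrix_apply]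
    fin_cases j <;> fin_cases i <;> simp [e0, e1, Finsupp.single_apply]
  have hdet : LinearMap.det R = 1 := by
    rw [← LinearMap.det_toMatrix b, hmat, Matrix.det_fin_two_of]; norm_num
  have hRinj : Function.Injective R := by
    have h := (LinearMap.equivOfDetNeZero R (by rw [hdet]; norm_num)).injective
    have hco : ⇑(LinearMap.equivOfDetNeZero R (by rw [hdet]; norm_num)) = ⇑R := by
      ext x; rfl
    rwa [hco] at h
  -- 1 + R + R² = 0
  have h3 : ∀ z : E2, z + R z + R (R z) = 0 := by
    have : (LinearMap.id + R + R ∘ₗ R : E2 →ₗ[ℝ] E2) = 0 := by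
      apply b.ext
      intro i
      fin_cases i <;>
        simp [LinearMap.add_apply, LinearMap.comp_apply, e0, e1, map_sub, map_neg] <;> abel
    intro z
    have := LinearMap.congr_fun this z
    simpa [LinearMap.add_apply, LinearMap.comp_apply] using this
  -- the affine symmetry σ
  set σ : E2 →ᵃ[ℝ] E2 := AffineMap.mk (fun x => B + R (x - A)) R (by
    intro p v
    simp only [vadd_eq_add]
    rw [show v + p - A = v + (p - A) by abel, map_add]
    abel) with hσdef
  have hσapp : ∀ x, σ x = B + R (x - A) := fun x => rfl
  have hσA : σ A = B := by simp [hσapp]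
  have hσB : σ B = C := by rw [hσapp, hR0]; abel
  have hσC : σ C = A := by rw [hσapp, hR1]; abel
  have hσT : ⇑σ '' T = T := by
    rw [hT, AffineMap.image_convexHull]
    congr 1
    rw [Set.image_insert_eq, Set.image_insert_eq, Set.image_singleton, hσA, hσB, hσC]
    ext x
    simp only [Set.mem_insert_iff, Set.mem_singleton_iff]
    tauto
  have hinj : Set.InjOn σ T := fun x _ y _ h => by
    have h' : R (x - A) = R (y - A) := by
      have := h; simp only [hσapp] at this
      exact add_left_cancel this
    have := hRinj h'
    exact sub_left_inj.mp this
  -- σ fixes the centroid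
  have hxA : xT - A = (3:ℝ)⁻¹ • ((B - A) + (C - A)) := by
    rw [hxT]; module
  have hRxA : R (xT - A) = (3:ℝ)⁻¹ • ((C - B) + (A - B)) := by
    rw [hxA, _root_.map_smul, map_add, hR0, hR1]
  have hfix : σ xT = xT := by
    rw [hσapp, hRxA, hxT]; module
  have hσsub : ∀ x : E2, B + R (x - A) - xT = R (x - xT) := by
    intro x
    have : xT = B + R (xT - A) := (hσapp xT ▸ hfix).symm
    calc B + R (x - A) - xT = R (x - A) - R (xT - A) := by
          conv_lhs => rw [this]
          abel
    _ = R (x - xT) := by rw [← map_sub]; congr 1; abel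
  -- change of variables setup
  set Rc : E2 →L[ℝ] E2 := LinearMap.toContinuousLinearMap R with hRc
  have hRcdet : Rc.det = 1 := by rw [ContinuousLinearMap.det]; exact hdet
  have hder : ∀ x ∈ T, HasFDerivWithinAt (⇑σ) Rc T x := by
    intro x _
    have h1 : HasFDerivAt (fun y => B + R (y - A)) Rc x := by
      have h0 := (Rc.hasFDerivAt (x := x)).sub_const (R A)
      have h2 := h0.const_add B
      refine h2.congr_of_eventuallyEq (Filter.Eventually.of_forall fun y => ?_)
      show B + R (y - A) = B + (Rc y - R A)
      rw [map_sub]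
      simp [hRc]
    exact (h1.congr_of_eventuallyEq
      (by filter_upwards with y using (hσapp y))).hasFDerivWithinAt
  -- integrability
  have hInt : IntegrableOn (fun x : E2 => x - xT) T volume :=
    ContinuousOn.integrableOn_compact hTcomp (continuous_id.sub continuous_const).continuousOn
  -- the first moment vanishes
  set M : E2 := ∫ x in T, (x - xT) with hM
  have hMR : M = Rc M := by
    have hcov := integral_image_eq_integral_abs_det_fderiv_smul (μ := volume) hTm
      (f' := fun _ => Rc) hder hinj (fun y => y - xT)
    rw [hσT] at hcov
    calc M = ∫ x in T, Rc (x - xT) := by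
          rw [hM, hcov]
          congr 1 with x
          rw [hRcdet, hσapp x, hσsub x]
          simp
          rfl
    _ = Rc M := by rw [Rc.integral_comp_comm hInt, ← hM]
  have hM0 : M = 0 := by
    have hM2 : Rc (Rc M) = M := by rw [← hMR, ← hMR]
    have := h3 M
    have hRM : R M = M := by
      have : Rc M = M := hMR.symm
      exact this
    rw [hRM, hRM] at this
    have h9 : (3:ℝ) • M = 0 := by
      rw [show (3:ℝ) • M = M + M + M by module]; exact this
    have := smul_eq_zero.mp h9
    exact this.resolve_left (by norm_num)
  -- positivity of K
  set K : ℝ := ∫ x in T, ‖x - xT‖ ^ 2 with hK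
  have hIntK : IntegrableOn (fun x : E2 => ‖x - xT‖ ^ 2) T volume :=
    ContinuousOn.integrableOn_compact hTcomp
      (((continuous_id.sub continuous_const).norm.pow 2).continuousOn)
  have hμT : 0 < volume T := by
    have hspan : affineSpan ℝ ({A, B, C} : Set E2) = ⊤ := by
      rw [show ({A, B, C} : Set E2) = Set.range ![A, B, C] by
        ext x
        simp [Fin.exists_fin_succ, Matrix.range_cons, Matrix.range_empty]
        tauto]
      exact hABC.affineSpan_eq_top_iff_card_eq_finrank_add_one.mpr (by simp)
    have hint : (interior T).Nonempty := by
      rw [hT]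
      exact interior_convexHull_nonempty_iff_affineSpan_eq_top.mpr hspan
    exact (IsOpen.measure_pos volume isOpen_interior hint).trans_le
      (measure_mono interior_subset)
  have hKpos : 0 < K := by
    rw [hK]
    rw [setIntegral_pos_iff_support_of_nonneg_ae
      (by filter_upwards with x using by positivity) hIntK]
    have hsupp : Function.support (fun x : E2 => ‖x - xT‖ ^ 2) = {xT}ᶜ := by
      ext x
      simp [Function.mem_support, sub_eq_zero, pow_eq_zero_iff, norm_eq_zero]
    rw [hsupp]
    calc 0 < volume T := hμT
    _ = volume (T \ {xT}) := (measure_diff_null (measure_singleton xT)).symm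
    _ ≤ volume ({xT}ᶜ ∩ T) := by rw [Set.diff_eq, Set.inter_comm]
  -- the key pointwise identity
  set w : E2 := a + c • xT with hw
  have key : ∀ x : E2, ⟪-CT • (x - xT), a + c • x⟫_ℝ
      = -CT * (⟪x - xT, w⟫_ℝ + c * ‖x - xT‖ ^ 2) := by
    intro x
    have hx : a + c • x = w + c • (x - xT) := by rw [hw]; module
    rw [hx, real_inner_smul_left, inner_add_right, real_inner_smul_right,
      real_inner_self_eq_norm_sq]
  -- the inner-product integral vanishes
  have hIntw : IntegrableOn (fun x : E2 => ⟪x - xT, w⟫_ℝ) T volume :=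
    ContinuousOn.integrableOn_compact hTcomp
      ((continuous_id.sub continuous_const).inner continuous_const).continuousOn
  have hzero : ∫ x in T, ⟪x - xT, w⟫_ℝ = 0 := by
    have hcomm : (fun x : E2 => ⟪x - xT, w⟫_ℝ) = fun x : E2 => ⟪w, x - xT⟫_ℝ :=
      funext fun x => real_inner_comm _ _
    rw [hcomm, integral_inner hInt w, ← hM, hM0, inner_zero_right]
  -- finish
  calc ∫ x in T, ⟪-CT • (x - xT), a + c • x⟫_ℝ
      = ∫ x in T, -CT * (⟪x - xT, w⟫_ℝ + c * ‖x - xT‖ ^ 2) := by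
        congr 1 with x; exact key x
    _ = -CT * ((∫ x in T, ⟪x - xT, w⟫_ℝ) + c * K) := by
        rw [integral_const_mul, integral_add hIntw (hIntK.const_mul c), integral_const_mul, ← hK]
    _ = -CT * (c * K) := by rw [hzero, zero_add]
    _ = -(∫ _x in T, (1 : ℝ) * (2 * c)) := by
        rw [setIntegral_const, smul_eq_mul, hCT, measureReal_def, ← hareaT]
        have hKne : K ≠ 0 := ne_of_gt hKpos
        field_simp
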